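/- arXiv:2211.10034 — 3 statements merged into one kernel-verified Lean document; each statement's English description precedes it below -/
import Mathlib

section
/- Let n ≥ 1 and d ≥ 2 be integers, A the closed unit ball in ℝⁿ, f(x) = |x₂ - x₁^d| + … + |xₙ - x_{n-1}^d| + |xₙ^d|, and g(x) = ‖x‖. Then f⁻¹(0) ∩ A = g⁻¹(0) ∩ A = {0}, and there is no exponent ρ < d^n and constant c such that |g(x)|^ρ ≤ c·|f(x)| holds for all x ∈ A; i.e., the Łojasiewicz exponent of (f, g) on A is at least d^n. -/
theorem stmt_3 (n d : ℕ) (hn : 1 ≤ n) (hd : 2 ≤ d)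
    (A : Set (EuclideanSpace ℝ (Fin n)))
    (hAdef : A = Metric.closedBall 0 1)
    (f : EuclideanSpace ℝ (Fin n) → ℝ)
    (hfdef : ∀ x, f x = ∑ i : Fin n,
      (if h : (i : ℕ) + 1 < n then |x ⟨(i : ℕ) + 1, h⟩ - (x i) ^ d| else |(x i) ^ d|)) :
    ({x ∈ A | f x = 0} = {0} ∧ {x ∈ A | ‖x‖ = 0} = {0}) ∧
    ¬ ∃ ρ : ℝ, ρ < (d : ℝ) ^ n ∧ ∃ c : ℝ, ∀ x ∈ A, ‖x‖ ^ ρ ≤ c * |f x| := by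
  have hd0 : d ≠ 0 := by omega
  have h0A : (0 : EuclideanSpace ℝ (Fin n)) ∈ A := by rw [hAdef]; simp
  constructor
  · constructor
    · ext x
      simp only [Set.mem_setOf_eq, Set.mem_singleton_iff]
      constructor
      · rintro ⟨hxA, hfx⟩
        rw [hfdef] at hfx
        have hterm : ∀ i ∈ (Finset.univ : Finset (Fin n)),
            (if h : (i : ℕ) + 1 < n then |x ⟨(i : ℕ) + 1, h⟩ - (x i) ^ d| else |(x i) ^ d|) = 0 := by
          rw [← Finset.sum_eq_zero_iff_of_nonneg]
          · exact hfx
          · intro i _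
            split <;> exact abs_nonneg _
        have key : ∀ j : ℕ, j < n → x ⟨n - 1 - j, by omega⟩ = 0 := by
          intro j
          induction j with
          | zero =>
            intro _
            have h1 := hterm ⟨n - 1, by omega⟩ (Finset.mem_univ _)
            rw [dif_neg (by simp; omega)] at h1
            exact pow_eq_zero_iff hd0 |>.mp (abs_eq_zero.mp h1)
          | succ j ih =>
            intro hj
            have h1 := hterm ⟨n - 1 - (j+1), by omega⟩ (Finset.mem_univ _)
            rw [dif_pos (show (n-1-(j+1)) + 1 < n by omega)] at h1
            have hx1 : x ⟨n-1-(j+1)+1, by omega⟩ = 0 := by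
              have he : (⟨n-1-(j+1)+1, by omega⟩ : Fin n) = ⟨n-1-j, by omega⟩ :=
                Fin.ext (by simp; omega)
              rw [he]; exact ih (by omega)
            rw [hx1] at h1
            have h2 : (x ⟨n-1-(j+1), by omega⟩) ^ d = 0 := by
              have := abs_eq_zero.mp h1; linarith
            exact pow_eq_zero_iff hd0 |>.mp h2
        ext i
        have he : (⟨n - 1 - (n - 1 - (i:ℕ)), by omega⟩ : Fin n) = i :=
          Fin.ext (by simp; omega)
        have := key (n - 1 - (i:ℕ)) (by omega)
        rw [he] at this
        simpa using this
      · rintro rfl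
        refine ⟨h0A, ?_⟩
        rw [hfdef]
        apply Finset.sum_eq_zero
        intro i _
        split <;> simp [zero_pow hd0]
    · ext x
      simp only [Set.mem_setOf_eq, Set.mem_singleton_iff]
      constructor
      · rintro ⟨_, h⟩; exact norm_eq_zero.mp h
      · rintro rfl; exact ⟨h0A, norm_zero⟩
  · rintro ⟨ρ, hρ, c, hc⟩
    set σ : ℝ := max ρ 0 with hσdef
    have hσ0 : 0 ≤ σ := le_max_right _ _
    have hdn : (0:ℝ) < (d:ℝ) ^ n := by positivity
    have hσlt : σ < (d:ℝ)^n := max_lt hρ hdn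
    set ε : ℝ := (d:ℝ)^n - σ with hεdef
    have hε : 0 < ε := by simp only [hεdef]; linarith
    set c' : ℝ := max c 1 with hc'def
    have hc'1 : (1:ℝ) ≤ c' := le_max_right _ _
    have hc'0 : (0:ℝ) < c' := lt_of_lt_of_le one_pos hc'1
    have hn0 : (0:ℝ) < (n:ℝ) := by exact_mod_cast hn
    set t : ℝ := min (1/(n:ℝ)) ((1/(2*c')) ^ (1/ε)) with htdef
    have ht0 : 0 < t := lt_min (by positivity) (Real.rpow_pos_of_pos (by positivity) _)
    have htn : t ≤ 1/(n:ℝ) := min_le_left _ _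
    have ht1 : t ≤ 1 := htn.trans (by rw [div_le_one hn0]; exact_mod_cast hn)
    set x : EuclideanSpace ℝ (Fin n) := WithLp.toLp 2 (fun i : Fin n => t ^ (d ^ (i:ℕ))) with hxdef
    have hxi : ∀ i : Fin n, x i = t ^ (d ^ (i:ℕ)) := fun i => rfl
    have hxile : ∀ i : Fin n, |x i| ≤ t := by
      intro i
      rw [hxi, abs_of_nonneg (by positivity)]
      calc t ^ (d ^ (i:ℕ)) ≤ t ^ 1 :=
            pow_le_pow_of_le_one ht0.le ht1 (Nat.one_le_pow _ _ (by omega))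
        _ = t := pow_one t
    have hnorm_ge : t ≤ ‖x‖ := by
      have h0 : x ⟨0, by omega⟩ = t := by rw [hxi]; simp
      calc t = |x ⟨0, by omega⟩| := by rw [h0, abs_of_nonneg ht0.le]
        _ ≤ ‖x‖ := by
            rw [EuclideanSpace.norm_eq]
            have h1 : |x ⟨0, by omega⟩| = Real.sqrt (‖x ⟨0, by omega⟩‖^2) := by
              rw [Real.sqrt_sq_eq_abs, Real.norm_eq_abs, abs_abs]
            rw [h1]
            apply Real.sqrt_le_sqrt
            exact Finset.single_le_sum (f := fun i => ‖x i‖^2)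
              (fun i _ => by positivity) (Finset.mem_univ _)
    have hnorm_le : ‖x‖ ≤ 1 := by
      rw [EuclideanSpace.norm_eq]
      have hs : ∑ i : Fin n, ‖x i‖^2 ≤ 1 := by
        calc ∑ i : Fin n, ‖x i‖^2 ≤ ∑ _i : Fin n, t^2 := by
              apply Finset.sum_le_sum
              intro i _
              rw [Real.norm_eq_abs]
              exact pow_le_pow_left₀ (abs_nonneg _) (hxile i) 2
          _ = (n:ℝ) * t^2 := by rw [Finset.sum_const]; simp [mul_comm]
          _ ≤ 1 := by
              have h1 : (n:ℝ) * t ≤ 1 := by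
                rw [le_div_iff₀ hn0] at htn
                linarith
              nlinarith
      calc Real.sqrt (∑ i : Fin n, ‖x i‖^2) ≤ Real.sqrt 1 := Real.sqrt_le_sqrt hs
        _ = 1 := Real.sqrt_one
    have hxA : x ∈ A := by rw [hAdef, Metric.mem_closedBall, dist_zero_right]; exact hnorm_le
    have hfx : f x = t ^ (d ^ n) := by
      rw [hfdef]
      rw [Finset.sum_eq_single (⟨n-1, by omega⟩ : Fin n)]
      · rw [dif_neg (by simp; omega)]
        rw [hxi, ← pow_mul, abs_of_nonneg (by positivity)]
        congr 1
        simp only []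
        rw [← pow_succ]
        congr 1
        omega
      · intro i _ hne
        have hilt : (i:ℕ) + 1 < n := by
          have := i.isLt
          rcases Nat.lt_or_ge ((i:ℕ)+1) n with h | h
          · exact h
          · exfalso; apply hne; exact Fin.ext (by simp; omega)
        rw [dif_pos hilt, hxi, hxi, ← pow_mul]
        have : d ^ ((i:ℕ)+1) = d ^ (i:ℕ) * d := pow_succ d (i:ℕ)
        simp only [this]
        simp
      · intro h; exact absurd (Finset.mem_univ _) h
    -- final contradiction
    have hρle : ρ ≤ σ := le_max_left _ _
    have h1 : t ^ σ ≤ ‖x‖ ^ σ := Real.rpow_le_rpow ht0.le hnorm_ge hσ0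
    have h2 : ‖x‖ ^ σ ≤ ‖x‖ ^ ρ :=
      Real.rpow_le_rpow_of_exponent_ge (lt_of_lt_of_le ht0 hnorm_ge) hnorm_le hρle
    have h3 : ‖x‖ ^ ρ ≤ c * |f x| := hc x hxA
    have h4 : c * |f x| ≤ c' * |f x| :=
      mul_le_mul_of_nonneg_right (le_max_left _ _) (abs_nonneg _)
    have hfxabs : |f x| = t ^ ((d:ℝ)^n) := by
      rw [hfx, abs_of_nonneg (by positivity), ← Real.rpow_natCast t (d^n)]
      congr 1
      push_cast
      ring
    have hsplit : t ^ ((d:ℝ)^n) = t ^ σ * t ^ ε := by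
      rw [← Real.rpow_add ht0]
      congr 1
      simp [hεdef]
    have htε : t ^ ε ≤ 1/(2*c') := by
      calc t ^ ε ≤ ((1/(2*c')) ^ (1/ε)) ^ ε :=
            Real.rpow_le_rpow ht0.le (min_le_right _ _) hε.le
        _ = (1/(2*c')) ^ ((1/ε) * ε) := by
            rw [← Real.rpow_mul (by positivity)]
        _ = 1/(2*c') := by
            rw [one_div_mul_cancel hε.ne', Real.rpow_one]
    have htσ : 0 < t ^ σ := Real.rpow_pos_of_pos ht0 _
    have hchain : t ^ σ ≤ c' * (t ^ σ * t ^ ε) := by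
      calc t ^ σ ≤ ‖x‖ ^ ρ := h1.trans h2
        _ ≤ c * |f x| := h3
        _ ≤ c' * |f x| := h4
        _ = c' * (t ^ σ * t ^ ε) := by rw [hfxabs, hsplit]
    have hfin : c' * (t ^ σ * t ^ ε) ≤ t ^ σ / 2 := by
      have : c' * t ^ ε ≤ 1/2 := by
        calc c' * t ^ ε ≤ c' * (1/(2*c')) := by
              exact mul_le_mul_of_nonneg_left htε hc'0.le
          _ = 1/2 := by
              field_simp
      nlinarith
    linarith
end

section
/- Let P ∈ ℝ[X] be a univariate polynomial and let σ be an assignment of signs (in {-1, 0, 1}) to each of P, P', P'', …, P^{(deg P)}. Then the set of x ∈ ℝ at which every derivative P^{(j)} has sign σ(P^{(j)}) is either empty, a single point, or an open interval (in particular, it is connected). -/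
open Polynomial Set

private lemma thom_between {f : ℝ → ℝ} {T : Set ℝ}
    (h : MonotoneOn f T ∨ AntitoneOn f T)
    {x y z : ℝ} (hx : x ∈ T) (hy : y ∈ T) (hz : z ∈ T) (h1 : x ≤ z) (h2 : z ≤ y) :
    (f x ≤ f z ∧ f z ≤ f y) ∨ (f y ≤ f z ∧ f z ≤ f x) := by
  rcases h with h | h
  · exact Or.inl ⟨h hx hz h1, h hz hy h2⟩
  · exact Or.inr ⟨h hz hy h2, h hx hz h1⟩

private lemma thom_aux : ∀ (n : ℕ) (P : Polynomial ℝ), P.natDegree ≤ n →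
    ∀ (σ : ℕ → SignType) (S : Set ℝ),
    S = {x : ℝ | ∀ j ≤ n, SignType.sign ((Polynomial.derivative^[j] P).eval x) = σ j} →
    S = ∅ ∨ (∃ a : ℝ, S = {a}) ∨ (IsOpen S ∧ S.Nonempty ∧ Convex ℝ S) := by
  intro n
  induction n with
  | zero =>
    intro P hP σ S hS
    obtain ⟨c, rfl⟩ := Polynomial.natDegree_eq_zero.mp (Nat.le_zero.mp hP)
    by_cases h : SignType.sign c = σ 0
    · right; right
      have : S = univ := by
        rw [hS]; ext x; simp [Nat.le_zero, h]
      rw [this]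
      exact ⟨isOpen_univ, univ_nonempty, convex_univ⟩
    · left
      rw [hS]; ext x; simp [Nat.le_zero, h]
  | succ n ih =>
    intro P hP σ S hS
    set f : ℝ → ℝ := fun x => P.eval x with hf
    set T : Set ℝ :=
      {x : ℝ | ∀ j ≤ n, SignType.sign ((Polynomial.derivative^[j] (derivative P)).eval x)
        = σ (j + 1)} with hT
    have hset : S = {x : ℝ | SignType.sign (P.eval x) = σ 0} ∩ T := by
      rw [hS]; ext x
      simp only [mem_setOf_eq, mem_inter_iff, hT]
      constructor
      · intro h
        refine ⟨by simpa using h 0 (Nat.zero_le _), fun j hj => ?_⟩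
        rw [← Function.iterate_succ_apply]
        exact h (j + 1) (Nat.succ_le_succ hj)
      · rintro ⟨h0, h⟩ j hj
        cases j with
        | zero => simpa using h0
        | succ k =>
          rw [Function.iterate_succ_apply]
          exact h k (Nat.succ_le_succ_iff.mp hj)
    by_cases hd : derivative P = 0
    · -- P is constant
      have hder : ∀ k : ℕ, Polynomial.derivative^[k + 1] P = 0 := by
        intro k
        rw [Function.iterate_succ_apply, hd]
        exact Function.iterate_fixed derivative_zero k
      have hconst : ∀ x y : ℝ, x ∈ S → y ∈ S := by
        rw [hS]
        intro x y hx j hj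
        have hxj := hx j hj
        cases j with
        | zero =>
          obtain ⟨c, rfl⟩ := Polynomial.natDegree_eq_zero.mp
            (natDegree_eq_zero_of_derivative_eq_zero hd)
          simpa using hxj
        | succ k =>
          rw [hder k] at hxj ⊢
          simpa using hxj
      rcases S.eq_empty_or_nonempty with h | ⟨a, ha⟩
      · exact Or.inl h
      · right; right
        have : S = univ := eq_univ_of_forall (fun y => hconst a y ha)
        rw [this]
        exact ⟨isOpen_univ, univ_nonempty, convex_univ⟩
    · have hTdeg : (derivative P).natDegree ≤ n := by
        refine (natDegree_derivative_le P).trans ?_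
        omega
      rcases ih (derivative P) hTdeg (fun j => σ (j + 1)) T rfl with hTe | ⟨a, hTa⟩ | ⟨hTo, hTne, hTc⟩
      · left
        rw [hset, hTe, inter_empty]
      · have hsub : S ⊆ {a} := by rw [hset, hTa]; exact inter_subset_right
        rcases (Set.subset_singleton_iff_eq).mp hsub with h | h
        · exact Or.inl h
        · exact Or.inr (Or.inl ⟨a, h⟩)
      · -- T open nonempty convex
        have hsig1 : ∀ x ∈ T, SignType.sign ((derivative P).eval x) = σ 1 := by
          intro x hx
          simpa using hx 0 (Nat.zero_le _)
        have hσ1 : σ 1 ≠ 0 := by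
          intro h0
          apply hd
          apply Polynomial.eq_zero_of_infinite_isRoot
          have hTsub : T ⊆ {x | (derivative P).IsRoot x} := by
            intro x hx
            have := hsig1 x hx
            rw [h0] at this
            exact sign_eq_zero_iff.mp this
          refine Set.Infinite.mono hTsub ?_
          obtain ⟨a, ha⟩ := hTne
          obtain ⟨ε, hε, hball⟩ := Metric.isOpen_iff.mp hTo a ha
          refine Set.Infinite.mono ?_ (Set.Ioo_infinite (show a - ε < a + ε by linarith))
          rw [← Real.ball_eq_Ioo]
          exact hball
        have hmono : StrictMonoOn f T ∨ StrictAntiOn f T := by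
          rcases hs1 : σ 1 with _ | _ | _
          · exact absurd hs1 hσ1
          · right
            apply strictAntiOn_of_deriv_neg hTc P.continuousOn
            intro x hx
            rw [hTo.interior_eq] at hx
            rw [Polynomial.deriv]
            exact sign_eq_neg_one_iff.mp ((hsig1 x hx).trans hs1)
          · left
            apply strictMonoOn_of_deriv_pos hTc P.continuousOn
            intro x hx
            rw [hTo.interior_eq] at hx
            rw [Polynomial.deriv]
            exact sign_eq_one_iff.mp ((hsig1 x hx).trans hs1)
        have hmono' : MonotoneOn f T ∨ AntitoneOn f T :=
          hmono.imp StrictMonoOn.monotoneOn StrictAntiOn.antitoneOn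
        have hinj : Set.InjOn f T := hmono.elim StrictMonoOn.injOn StrictAntiOn.injOn
        have hmemS : ∀ x, x ∈ S ↔ SignType.sign (f x) = σ 0 ∧ x ∈ T := by
          intro x; rw [hset]; rfl
        by_cases hσ0 : σ 0 = 0
        · rcases S.eq_empty_or_nonempty with h | ⟨a, ha⟩
          · exact Or.inl h
          · right; left
            refine ⟨a, Set.eq_singleton_iff_unique_mem.mpr ⟨ha, fun y hy => ?_⟩⟩
            obtain ⟨hy0, hyT⟩ := (hmemS y).mp hy
            obtain ⟨ha0, haT⟩ := (hmemS a).mp ha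
            apply hinj hyT haT
            rw [hσ0] at hy0 ha0
            rw [sign_eq_zero_iff.mp hy0, sign_eq_zero_iff.mp ha0]
        · rcases S.eq_empty_or_nonempty with h | hne
          · exact Or.inl h
          right; right
          refine ⟨?_, hne, ?_⟩
          · -- openness
            rcases hs0 : σ 0 with _ | _ | _
            · exact absurd hs0 hσ0
            · have : S = {x | f x < 0} ∩ T := by
                rw [hset]; ext x
                simp [hs0, sign_eq_neg_one_iff, hf]
              rw [this]
              exact (isOpen_lt P.continuous continuous_const).inter hTo
            · have : S = {x | 0 < f x} ∩ T := by
                rw [hset]; ext x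
                simp [hs0, sign_eq_one_iff, hf]
              rw [this]
              exact (isOpen_lt continuous_const P.continuous).inter hTo
          · -- convexity
            apply Set.OrdConnected.convex
            constructor
            intro x hx y hy z hz
            obtain ⟨hx0, hxT⟩ := (hmemS x).mp hx
            obtain ⟨hy0, hyT⟩ := (hmemS y).mp hy
            have hzT : z ∈ T := hTc.ordConnected.out hxT hyT hz
            refine (hmemS z).mpr ⟨?_, hzT⟩
            have hbet := thom_between hmono' hxT hyT hzT hz.1 hz.2
            rcases hs0 : σ 0 with _ | _ | _
            · exact absurd hs0 hσ0
            · rw [hs0] at hx0 hy0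
              have hxlt := sign_eq_neg_one_iff.mp hx0
              have hylt := sign_eq_neg_one_iff.mp hy0
              refine sign_eq_neg_one_iff.mpr ?_
              rcases hbet with ⟨_, h2⟩ | ⟨_, h2⟩ <;> linarith
            · rw [hs0] at hx0 hy0
              have hxlt := sign_eq_one_iff.mp hx0
              have hylt := sign_eq_one_iff.mp hy0
              refine sign_eq_one_iff.mpr ?_
              rcases hbet with ⟨h1, _⟩ | ⟨h1, _⟩ <;> linarith

theorem stmt_5 (P : Polynomial ℝ) (σ : ℕ → SignType)
    (S : Set ℝ)
    (hS : S = {x : ℝ | ∀ j ≤ P.natDegree,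
      SignType.sign ((Polynomial.derivative^[j] P).eval x) = σ j}) :
    S = ∅ ∨ (∃ a : ℝ, S = {a}) ∨ (IsOpen S ∧ S.Nonempty ∧ Convex ℝ S) := by
  exact thom_aux P.natDegree P le_rfl σ S hS
end

section
/- Let P ∈ ℝ[X] be a nonzero univariate polynomial and let x, y ∈ ℝ be roots of P such that for every j with 0 ≤ j ≤ deg P, sign(P^{(j)}(x)) = sign(P^{(j)}(y)). Then x = y. (Roots of a polynomial are uniquely determined by their Thom encoding.) -/
open Polynomial Set

private lemma const_eval {Q : ℝ[X]} (h : Q.natDegree = 0) (z w : ℝ) :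
    Q.eval z = Q.eval w := by
  obtain ⟨a, rfl⟩ := natDegree_eq_zero.mp h
  simp

private lemma thom_claim (P : ℝ[X]) (x y : ℝ) (hxy : x < y)
    (hsign : ∀ j ≤ P.natDegree,
      SignType.sign ((derivative^[j] P).eval x)
        = SignType.sign ((derivative^[j] P).eval y)) :
    ∀ k j, 1 ≤ j → P.natDegree ≤ j + k → ∀ z ∈ Set.Icc x y,
      SignType.sign ((derivative^[j] P).eval z)
        = SignType.sign ((derivative^[j] P).eval x) := by
  intro k
  induction k with
  | zero =>
    intro j _ hdeg z _
    have h0 : (derivative^[j] P).natDegree = 0 :=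
      le_antisymm ((natDegree_iterate_derivative P j).trans (by omega)) (Nat.zero_le _)
    rw [const_eval h0 z x]
  | succ k ih =>
    intro j hj hdeg z hz
    by_cases hje : P.natDegree ≤ j
    · have h0 : (derivative^[j] P).natDegree = 0 :=
        le_antisymm ((natDegree_iterate_derivative P j).trans (by omega)) (Nat.zero_le _)
      rw [const_eval h0 z x]
    · have ihs := ih (j + 1) (by omega) (by omega)
      set Q := derivative^[j] P with hQ
      have hQd : derivative^[j + 1] P = derivative Q := by
        rw [Function.iterate_succ_apply']
      rw [hQd] at ihs
      have hcont : ContinuousOn (fun t => Q.eval t) (Set.Icc x y) :=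
        Q.continuous.continuousOn
      have hsQ : SignType.sign (Q.eval x) = SignType.sign (Q.eval y) :=
        hsign j (by omega)
      rcases lt_trichotomy ((derivative Q).eval x) 0 with hneg | hzero | hpos
      · -- derivative negative on Icc : Q strictly antitone
        have hneg' : ∀ w ∈ Set.Icc x y, (derivative Q).eval w < 0 := by
          intro w hw
          have := ihs w hw
          rw [sign_eq_neg_one_iff.mpr hneg] at this
          exact sign_eq_neg_one_iff.mp this
        have hanti : StrictAntiOn (fun t => Q.eval t) (Set.Icc x y) := by
          apply strictAntiOn_of_deriv_neg (convex_Icc x y) hcont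
          intro w hw
          rw [interior_Icc] at hw
          rw [Polynomial.deriv]
          exact hneg' w (Ioo_subset_Icc_self hw)
        have hmem : x ∈ Set.Icc x y := left_mem_Icc.mpr hxy.le
        have hmem' : y ∈ Set.Icc x y := right_mem_Icc.mpr hxy.le
        rcases lt_trichotomy (Q.eval x) 0 with h1 | h1 | h1
        · have hzle : Q.eval z ≤ Q.eval x := by
            rcases eq_or_lt_of_le hz.1 with h | h
            · rw [← h]
            · exact (hanti hmem hz h).le
          rw [sign_eq_neg_one_iff.mpr h1, sign_eq_neg_one_iff.mpr (hzle.trans_lt h1)]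
        · exfalso
          have hy1 : Q.eval y = 0 := by
            have := hsQ.symm
            rw [sign_eq_zero_iff.mpr h1] at this
            exact sign_eq_zero_iff.mp this
          have := hanti hmem hmem' hxy
          simp only [h1, hy1] at this
          exact lt_irrefl 0 this
        · have hy1 : 0 < Q.eval y := by
            have := hsQ.symm
            rw [sign_eq_one_iff.mpr h1] at this
            exact sign_eq_one_iff.mp this
          have hzge : Q.eval y ≤ Q.eval z := by
            rcases eq_or_lt_of_le hz.2 with h | h
            · rw [h]
            · exact (hanti hz hmem' h).le
          rw [sign_eq_one_iff.mpr h1, sign_eq_one_iff.mpr (hy1.trans_le hzge)]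
      · -- derivative zero on Icc : Q is constant
        have hz0 : ∀ w ∈ Set.Icc x y, (derivative Q).eval w = 0 := by
          intro w hw
          have := ihs w hw
          rw [sign_eq_zero_iff.mpr hzero] at this
          exact sign_eq_zero_iff.mp this
        have hQ'0 : derivative Q = 0 := by
          apply Polynomial.eq_zero_of_infinite_isRoot
          apply Set.Infinite.mono (s := Set.Icc x y) _ (Set.Icc_infinite hxy)
          intro w hw
          exact hz0 w hw
        have h0 : Q.natDegree = 0 := natDegree_eq_zero_of_derivative_eq_zero hQ'0
        rw [const_eval h0 z x]
      · -- derivative positive on Icc : Q strictly monotone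
        have hpos' : ∀ w ∈ Set.Icc x y, 0 < (derivative Q).eval w := by
          intro w hw
          have := ihs w hw
          rw [sign_eq_one_iff.mpr hpos] at this
          exact sign_eq_one_iff.mp this
        have hmono : StrictMonoOn (fun t => Q.eval t) (Set.Icc x y) := by
          apply strictMonoOn_of_deriv_pos (convex_Icc x y) hcont
          intro w hw
          rw [interior_Icc] at hw
          rw [Polynomial.deriv]
          exact hpos' w (Ioo_subset_Icc_self hw)
        have hmem : x ∈ Set.Icc x y := left_mem_Icc.mpr hxy.le
        have hmem' : y ∈ Set.Icc x y := right_mem_Icc.mpr hxy.le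
        rcases lt_trichotomy (Q.eval x) 0 with h1 | h1 | h1
        · have hy1 : Q.eval y < 0 := by
            have := hsQ.symm
            rw [sign_eq_neg_one_iff.mpr h1] at this
            exact sign_eq_neg_one_iff.mp this
          have hzle : Q.eval z ≤ Q.eval y := by
            rcases eq_or_lt_of_le hz.2 with h | h
            · rw [h]
            · exact (hmono hz hmem' h).le
          rw [sign_eq_neg_one_iff.mpr h1, sign_eq_neg_one_iff.mpr (hzle.trans_lt hy1)]
        · exfalso
          have hy1 : Q.eval y = 0 := by
            have := hsQ.symm
            rw [sign_eq_zero_iff.mpr h1] at this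
            exact sign_eq_zero_iff.mp this
          have := hmono hmem hmem' hxy
          simp only [h1, hy1] at this
          exact lt_irrefl 0 this
        · have hzge : Q.eval x ≤ Q.eval z := by
            rcases eq_or_lt_of_le hz.1 with h | h
            · rw [← h]
            · exact (hmono hmem hz h).le
          rw [sign_eq_one_iff.mpr h1, sign_eq_one_iff.mpr (h1.trans_le hzge)]

private lemma thom_false (P : ℝ[X]) (hP : P ≠ 0) (x y : ℝ) (hxy : x < y)
    (hx : P.eval x = 0) (hy : P.eval y = 0)
    (hsign : ∀ j ≤ P.natDegree,
      SignType.sign ((derivative^[j] P).eval x)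
        = SignType.sign ((derivative^[j] P).eval y)) : False := by
  have claim1 := thom_claim P x y hxy hsign P.natDegree 1 le_rfl (by omega)
  simp only [Function.iterate_one] at claim1
  obtain ⟨c, hc, hc0⟩ := exists_deriv_eq_zero hxy (P.continuous.continuousOn)
    (hx.trans hy.symm)
  rw [Polynomial.deriv] at hc0
  have hsx : SignType.sign ((derivative P).eval x) = 0 := by
    have := claim1 c (Ioo_subset_Icc_self hc)
    rw [hc0] at this
    simpa using this.symm
  have hall : ∀ w ∈ Set.Icc x y, (derivative P).eval w = 0 := by
    intro w hw
    have := claim1 w hw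
    rw [hsx] at this
    exact sign_eq_zero_iff.mp this
  have hP'0 : derivative P = 0 := by
    apply Polynomial.eq_zero_of_infinite_isRoot
    apply Set.Infinite.mono (s := Set.Icc x y) _ (Set.Icc_infinite hxy)
    intro w hw
    exact hall w hw
  have h0 : P.natDegree = 0 := natDegree_eq_zero_of_derivative_eq_zero hP'0
  obtain ⟨a, rfl⟩ := natDegree_eq_zero.mp h0
  simp at hx
  exact hP (by rw [hx, map_zero])

theorem stmt_6 (P : Polynomial ℝ) (hP : P ≠ 0) (x y : ℝ)
    (hx : P.eval x = 0) (hy : P.eval y = 0)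
    (hsign : ∀ j ≤ P.natDegree,
      SignType.sign ((Polynomial.derivative^[j] P).eval x)
        = SignType.sign ((Polynomial.derivative^[j] P).eval y)) :
    x = y := by
  rcases lt_trichotomy x y with h | h | h
  · exact absurd (thom_false P hP x y h hx hy hsign) not_false
  · exact h
  · exact absurd (thom_false P hP y x h hy hx (fun j hj => (hsign j hj).symm)) not_false
end
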